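/- Let φ : ℝ^n → ℝ be differentiable and convex with (1/α)-Lipschitz gradient (α > 0), let c ∈ ℝ^n, δ > 0, and I ⊆ {1,…,n}. Suppose y, y⁺ ∈ ℝ^n satisfy y⁺_i = y_i for i ∉ I and y⁺_i − y_i = δ(c_i − (∇φ(y⁺))_i) for i ∈ I. Then (⟨c, y⁺⟩ − φ(y⁺)) − (⟨c, y⟩ − φ(y)) ≤ (1/δ + 1/(2α))‖y⁺ − y‖². -/

import Mathlib

open RealInnerProductSpace

lemma descent {F : Type*} [NormedAddCommGroup F] [InnerProductSpace ℝ F] [CompleteSpace F]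
    (φ : F → ℝ) (φ' : F → F) (α : ℝ) (hα : 0 < α)
    (hdiff : ∀ y, HasGradientAt φ (φ' y) y)
    (hlip : ∀ u v, ‖φ' u - φ' v‖ ≤ (1 / α) * ‖u - v‖) (u v : F) :
    φ v ≤ φ u + ⟪φ' u, v - u⟫ + (1 / (2 * α)) * ‖v - u‖ ^ 2 := by
  set d := v - u with hd
  have hcurve : ∀ t : ℝ, HasDerivAt (fun t : ℝ => u + t • d) d t := fun t => by
    simpa using ((hasDerivAt_id t).smul_const d).const_add u
  have hder : ∀ t : ℝ, HasDerivAt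
      (fun t : ℝ => φ (u + t • d) - t * ⟪φ' u, d⟫ - t ^ 2 * (1 / (2 * α)) * ‖d‖ ^ 2)
      (⟪φ' (u + t • d), d⟫ - ⟪φ' u, d⟫ - 2 * t * (1 / (2 * α)) * ‖d‖ ^ 2) t := by
    intro t
    have h1 : HasDerivAt (fun t : ℝ => φ (u + t • d)) ⟪φ' (u + t • d), d⟫ t := by
      have := ((hdiff (u + t • d)).hasFDerivAt).comp_hasDerivAt t (hcurve t)
      simpa [InnerProductSpace.toDual_apply_apply, Function.comp_def] using this
    have h2 : HasDerivAt (fun t : ℝ => t * ⟪φ' u, d⟫) ⟪φ' u, d⟫ t := by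
      simpa using (hasDerivAt_id t).mul_const ⟪φ' u, d⟫
    have h3 := ((hasDerivAt_pow 2 t).mul_const (1 / (2 * α))).mul_const (‖d‖ ^ 2)
    have h3' : HasDerivAt (fun t : ℝ => t ^ 2 * (1 / (2 * α)) * ‖d‖ ^ 2)
        (2 * t * (1 / (2 * α)) * ‖d‖ ^ 2) t := by
      exact h3.congr_deriv (by norm_num)
    exact (h1.sub h2).sub h3'
  have hdiffble : Differentiable ℝ
      (fun t : ℝ => φ (u + t • d) - t * ⟪φ' u, d⟫ - t ^ 2 * (1 / (2 * α)) * ‖d‖ ^ 2) :=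
    fun t => (hder t).differentiableAt
  have hmono : AntitoneOn
      (fun t : ℝ => φ (u + t • d) - t * ⟪φ' u, d⟫ - t ^ 2 * (1 / (2 * α)) * ‖d‖ ^ 2)
      (Set.Icc 0 1) := by
    apply antitoneOn_of_deriv_nonpos (convex_Icc 0 1) hdiffble.continuous.continuousOn
      (fun t _ => (hdiffble t).differentiableWithinAt)
    intro t ht
    rw [interior_Icc] at ht
    rw [(hder t).deriv]
    have hb : ⟪φ' (u + t • d), d⟫ - ⟪φ' u, d⟫ ≤ (1 / α) * (t * ‖d‖) * ‖d‖ := by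
      rw [← inner_sub_left]
      calc ⟪φ' (u + t • d) - φ' u, d⟫ ≤ ‖φ' (u + t • d) - φ' u‖ * ‖d‖ :=
            real_inner_le_norm _ _
        _ ≤ ((1 / α) * ‖(u + t • d) - u‖) * ‖d‖ := by gcongr; exact hlip _ _
        _ = (1 / α) * (t * ‖d‖) * ‖d‖ := by
            rw [add_sub_cancel_left, norm_smul, Real.norm_eq_abs, abs_of_pos ht.1]
    have e : (1 : ℝ) / α * (t * ‖d‖) * ‖d‖ = 2 * t * (1 / (2 * α)) * ‖d‖ ^ 2 := by
      field_simp
    linarith [hb, e]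
  have hf10 := hmono (Set.mem_Icc.mpr ⟨le_refl 0, zero_le_one⟩)
    (Set.mem_Icc.mpr ⟨zero_le_one, le_refl 1⟩) zero_le_one
  simp only [zero_smul, add_zero, zero_pow, one_smul, one_pow, one_mul, zero_mul,
    sub_zero, mul_zero] at hf10
  have huv : u + d = v := by rw [hd]; abel
  rw [huv] at hf10
  linarith

theorem stmt_7 {n : ℕ} (φ : EuclideanSpace ℝ (Fin n) → ℝ)
    (φ' : EuclideanSpace ℝ (Fin n) → EuclideanSpace ℝ (Fin n))
    (α : ℝ) (hα : 0 < α)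
    (hdiff : ∀ y, HasGradientAt φ (φ' y) y)
    (hconv : ConvexOn ℝ Set.univ φ)
    (hlip : ∀ u v, ‖φ' u - φ' v‖ ≤ (1 / α) * ‖u - v‖)
    (c : EuclideanSpace ℝ (Fin n)) (δ : ℝ) (hδ : 0 < δ)
    (I : Finset (Fin n)) (y yplus : EuclideanSpace ℝ (Fin n))
    (hout : ∀ i ∉ I, yplus i = y i)
    (hin : ∀ i ∈ I, yplus i - y i = δ * (c i - φ' yplus i)) :
    (⟪c, yplus⟫ - φ yplus) - (⟪c, y⟫ - φ y) ≤
      (1 / δ + 1 / (2 * α)) * ‖yplus - y‖ ^ 2 := by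
  set d : EuclideanSpace ℝ (Fin n) := yplus - y with hd
  have hdi : ∀ i, d i = yplus i - y i := fun i => rfl
  have hkey : ⟪c - φ' yplus, d⟫ = (1 / δ) * ‖d‖ ^ 2 := by
    rw [← real_inner_self_eq_norm_sq, PiLp.inner_apply, PiLp.inner_apply,
      Finset.mul_sum]
    apply Finset.sum_congr rfl
    intro i _
    simp only [RCLike.inner_apply, conj_trivial, PiLp.sub_apply, hdi]
    by_cases hi : i ∈ I
    · have := hin i hi
      have hδ' : δ ≠ 0 := ne_of_gt hδ
      rw [this]
      field_simp
    · rw [hout i hi]; ring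
  have hdesc := descent φ φ' α hα hdiff hlip yplus y
  have hinner : ⟪c, yplus⟫ - ⟪c, y⟫ = ⟪c - φ' yplus, d⟫ + ⟪φ' yplus, d⟫ := by
    rw [inner_sub_left, hd, inner_sub_right]; ring
  have hneg : ⟪φ' yplus, y - yplus⟫ = - ⟪φ' yplus, d⟫ := by
    rw [hd, ← inner_neg_right]; congr 1; abel
  have hnorm : ‖y - yplus‖ = ‖d‖ := by rw [hd, norm_sub_rev]
  rw [hneg, hnorm] at hdesc
  rw [hd] at *
  linarith [hkey, hdesc, hinner]
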